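/- arXiv:2501.00212 — 4 statements merged into one kernel-verified Lean document; each statement's English description precedes it below -/
import Mathlib

section
/- Let ξ₁ and ξ₂ be independent real Gaussian random variables with mean 0 and variance σ². Then for any polynomial f with complex coefficients and any real x, E[f(x + ξ₁ + i·ξ₂)] = f(x). -/
open MeasureTheory ProbabilityTheory Complex Filter Finset

namespace PolyDebiasAux

noncomputable section

variable {v : NNReal}

/-- transfer integrals over gaussian to weighted Lebesgue integrals -/
lemma integral_gauss (hv : v ≠ 0) {E : Type*} [NormedAddCommGroup E] [NormedSpace ℝ E]
    (g : ℝ → E) :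
    ∫ x, g x ∂(gaussianReal 0 v) = ∫ x, gaussianPDFReal 0 v x • g x := by
  rw [gaussianReal_of_var_ne_zero _ hv]
  have h : gaussianPDF 0 v = fun x => ((gaussianPDFReal 0 v x).toNNReal : ENNReal) := rfl
  rw [h, integral_withDensity_eq_integral_smul ((measurable_gaussianPDFReal 0 v).real_toNNReal)]
  congr 1
  funext x
  rw [NNReal.smul_def, Real.coe_toNNReal _ (gaussianPDFReal_nonneg 0 v x)]

lemma integrable_gauss_iff (hv : v ≠ 0) {E : Type*} [NormedAddCommGroup E] [NormedSpace ℝ E]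
    (g : ℝ → E) :
    Integrable g (gaussianReal 0 v) ↔
      Integrable (fun x => gaussianPDFReal 0 v x • g x) volume := by
  rw [gaussianReal_of_var_ne_zero _ hv]
  have h : gaussianPDF 0 v = fun x => ((gaussianPDFReal 0 v x).toNNReal : ENNReal) := rfl
  rw [h, integrable_withDensity_iff_integrable_smul
    ((measurable_gaussianPDFReal 0 v).real_toNNReal)]
  apply integrable_congr
  filter_upwards with x
  rw [NNReal.smul_def, Real.coe_toNNReal _ (gaussianPDFReal_nonneg 0 v x)]

lemma pdf_eq (hv : v ≠ 0) (x : ℝ) :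
    gaussianPDFReal 0 v x = (Real.sqrt (2 * Real.pi * v))⁻¹ *
      Real.exp (-(2 * (v:ℝ))⁻¹ * x ^ 2) := by
  unfold gaussianPDFReal
  rw [show -(x - 0)^2/(2*(v:ℝ)) = -(2*(v:ℝ))⁻¹ * x^2 by ring]

/-- integrability of |x|^n * gaussian kernel -/
lemma integrable_abs_pow_mul_exp {b : ℝ} (hb : 0 < b) (n : ℕ) :
    Integrable (fun x : ℝ => |x| ^ n * Real.exp (-b * x ^ 2)) := by
  have hc : 0 < b / 2 := by linarith
  have hK : (0:ℝ) < (b/2)^n := by positivity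
  refine Integrable.mono'
    ((integrable_exp_neg_mul_sq hb).add
      (((integrable_exp_neg_mul_sq hc).const_mul ((n.factorial : ℝ) / (b/2)^n)))) ?_ ?_
  · exact ((_root_.continuous_abs.pow n).mul
      ((continuous_const.mul (continuous_pow 2)).rexp)).aestronglyMeasurable
  · filter_upwards with x
    have he : (0:ℝ) < Real.exp (-b * x ^ 2) := Real.exp_pos _
    simp only [Pi.add_apply]
    rw [Real.norm_eq_abs, _root_.abs_of_nonneg (by positivity)]
    have h1 : |x| ^ n ≤ 1 + (x ^ 2) ^ n := by
      rcases le_total (|x|) 1 with h | h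
      · have := pow_le_one₀ (n := n) (abs_nonneg x) h
        nlinarith [pow_nonneg (sq_nonneg x) n]
      · have h2 : |x| ^ n ≤ |x| ^ (2 * n) :=
          pow_le_pow_right₀ h (by omega)
        have h3 : |x| ^ (2 * n) = (x ^ 2) ^ n := by
          rw [pow_mul, _root_.sq_abs]
        nlinarith [h2, h3]
    have h2 : (x ^ 2) ^ n ≤ (n.factorial : ℝ) / (b/2)^n * Real.exp (b/2 * x ^ 2) := by
      have := Real.pow_div_factorial_le_exp (x := b/2 * x ^ 2) (by positivity) n
      have hfac : (0:ℝ) < n.factorial := by positivity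
      rw [mul_pow, div_le_iff₀ hfac] at this
      rw [div_mul_eq_mul_div, le_div_iff₀ hK]
      nlinarith [this]
    have h3 : Real.exp (b/2 * x^2) * Real.exp (-b * x^2) = Real.exp (-(b/2) * x^2) := by
      rw [← Real.exp_add]; ring_nf
    calc |x| ^ n * Real.exp (-b * x ^ 2)
        ≤ (1 + (n.factorial : ℝ) / (b/2)^n * Real.exp (b/2 * x ^ 2)) * Real.exp (-b * x^2) := by
          apply mul_le_mul_of_nonneg_right ?_ he.le
          exact h1.trans (by linarith)
      _ = Real.exp (-b * x^2) + (n.factorial : ℝ) / (b/2)^n *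
            (Real.exp (b/2 * x^2) * Real.exp (-b * x^2)) := by ring
      _ = Real.exp (-b * x^2) + (n.factorial : ℝ) / (b/2)^n * Real.exp (-(b/2) * x^2) := by
            rw [h3]

lemma integrable_abs_pow_gauss (hv : v ≠ 0) (n : ℕ) :
    Integrable (fun x : ℝ => |x| ^ n) (gaussianReal 0 v) := by
  have hv' : (0:ℝ) < v := by
    simpa [pos_iff_ne_zero] using hv
  have hb : (0:ℝ) < (2 * (v:ℝ))⁻¹ := by positivity
  rw [integrable_gauss_iff hv]
  have heq : (fun x : ℝ => gaussianPDFReal 0 v x • |x| ^ n) =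
      fun x : ℝ => (Real.sqrt (2 * Real.pi * v))⁻¹ *
        (|x| ^ n * Real.exp (-(2 * (v:ℝ))⁻¹ * x ^ 2)) := by
    funext x
    rw [smul_eq_mul, pdf_eq hv]
    ring
  rw [heq]
  exact (integrable_abs_pow_mul_exp hb n).const_mul _

lemma integrable_pow_gauss (hv : v ≠ 0) (n : ℕ) :
    Integrable (fun x : ℝ => x ^ n) (gaussianReal 0 v) := by
  refine (integrable_abs_pow_gauss hv n).mono' ?_ ?_
  · exact (continuous_pow n).aestronglyMeasurable
  · filter_upwards with x
    rw [Real.norm_eq_abs, _root_.abs_pow]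

lemma integrable_cpow_gauss (hv : v ≠ 0) (n : ℕ) :
    Integrable (fun x : ℝ => ((x:ℂ)) ^ n) (gaussianReal 0 v) := by
  refine (integrable_abs_pow_gauss hv n).mono' ?_ ?_
  · exact ((Complex.continuous_ofReal.pow n)).aestronglyMeasurable
  · filter_upwards with x
    rw [norm_pow, Complex.norm_real, Real.norm_eq_abs]

/-- The gaussian moment recursion via integration by parts. -/
lemma mom_rec (hv : v ≠ 0) (n : ℕ) :
    ∫ x, x ^ (n+1) ∂(gaussianReal 0 v) =
      (v:ℝ) * n * ∫ x, x ^ (n-1) ∂(gaussianReal 0 v) := by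
  have hv' : (0:ℝ) < v := by simpa [pos_iff_ne_zero] using hv
  set C : ℝ := (Real.sqrt (2 * Real.pi * v))⁻¹ with hC
  set b : ℝ := (2 * (v:ℝ))⁻¹ with hbdef
  have hb : (0:ℝ) < b := by positivity
  have hC0 : (0:ℝ) < C := by positivity
  -- kernel integrability
  have hker : ∀ k : ℕ, Integrable (fun x : ℝ => x ^ k * Real.exp (-b * x ^ 2)) volume := by
    intro k
    refine (integrable_abs_pow_mul_exp hb k).mono' ?_ ?_
    · exact ((continuous_pow k).mul
        ((continuous_const.mul (continuous_pow 2)).rexp)).aestronglyMeasurable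
    · filter_upwards with x
      rw [Real.norm_eq_abs, _root_.abs_mul, _root_.abs_pow, _root_.abs_of_nonneg (Real.exp_pos _).le]
  -- the function and its derivative
  set G : ℝ → ℝ := fun x => (v:ℝ) * C * (x ^ n * Real.exp (-b * x ^ 2)) with hG
  set D : ℝ → ℝ := fun x =>
    (v:ℝ) * (n:ℝ) * (x ^ (n-1) * (C * Real.exp (-b * x ^ 2)))
      - x ^ (n+1) * (C * Real.exp (-b * x ^ 2)) with hD
  have hderiv : ∀ x : ℝ, HasDerivAt G (D x) x := by
    intro x
    have h2 : HasDerivAt (fun y : ℝ => -b * y ^ 2) (-b * (2 * x ^ 1)) x :=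
      (hasDerivAt_pow 2 x).const_mul (-b)
    have h3 : HasDerivAt (fun y : ℝ => Real.exp (-b * y ^ 2))
        (Real.exp (-b * x ^ 2) * (-b * (2 * x ^ 1))) x := h2.exp
    have h4 : HasDerivAt (fun y : ℝ => y ^ n * Real.exp (-b * y ^ 2))
        ((n:ℝ) * x ^ (n-1) * Real.exp (-b * x ^ 2)
          + x ^ n * (Real.exp (-b * x ^ 2) * (-b * (2 * x ^ 1)))) x :=
      (hasDerivAt_pow n x).mul h3
    have h5 := h4.const_mul ((v:ℝ) * C)
    refine h5.congr_deriv ?_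
    symm
    have hvb : (v:ℝ) * (2 * b) = 1 := by
      rw [hbdef]; field_simp
    rw [hD]
    have hxp : x ^ (n+1) = x ^ n * x ^ 1 := by rw [← pow_add]
    linear_combination (C * Real.exp (-b * x ^ 2) * x ^ n * x ^ 1) * hvb
      - (C * Real.exp (-b * x ^ 2)) * hxp
  -- limits of G at ±∞
  have hK0 : Tendsto (fun t : ℝ => t ^ n * Real.exp (-b * t ^ 2)) atTop (nhds 0) := by
    have h1 : Tendsto (fun t : ℝ => b * t) atTop atTop :=
      Tendsto.const_mul_atTop hb tendsto_id
    have h2 : Tendsto (fun t : ℝ => (b * t) ^ n * Real.exp (-(b * t)) * (b ^ n)⁻¹)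
        atTop (nhds 0) := by
      have := ((Real.tendsto_pow_mul_exp_neg_atTop_nhds_zero n).comp h1).mul_const ((b ^ n)⁻¹)
      simpa using this
    have h3 : Tendsto (fun t : ℝ => t ^ n * Real.exp (-(b * t))) atTop (nhds 0) := by
      refine h2.congr (fun t => ?_)
      have hbn : (b:ℝ) ^ n ≠ 0 := by positivity
      field_simp [mul_pow]
      ring
    refine tendsto_of_tendsto_of_tendsto_of_le_of_le' tendsto_const_nhds h3 ?_ ?_
    · filter_upwards [eventually_ge_atTop (1:ℝ)] with t ht
      positivity
    · filter_upwards [eventually_ge_atTop (1:ℝ)] with t ht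
      have h4 : b * t ≤ b * t ^ 2 := by nlinarith [mul_nonneg (mul_nonneg hb.le (by linarith : (0:ℝ) ≤ t)) (by linarith : (0:ℝ) ≤ t - 1)]
      have h5 : Real.exp (-b * t ^ 2) ≤ Real.exp (-(b * t)) := by
        apply Real.exp_le_exp.2; nlinarith
      have h6 : (0:ℝ) ≤ t ^ n := by positivity
      nlinarith [Real.exp_pos (-b * t ^ 2), Real.exp_pos (-(b * t))]
  have hKabs : ∀ l : Filter ℝ, Tendsto (abs : ℝ → ℝ) l atTop →
      Tendsto G l (nhds 0) := by
    intro l hl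
    have h7 : Tendsto (fun t : ℝ => |t| ^ n * Real.exp (-b * t ^ 2)) l (nhds 0) := by
      have := hK0.comp hl
      refine this.congr (fun t => ?_)
      simp only [Function.comp_apply]
      rw [← _root_.sq_abs t]
    have h8 := (h7.const_mul ((v:ℝ) * C)).neg
    have h9 := h7.const_mul ((v:ℝ) * C)
    rw [mul_zero] at h9
    rw [mul_zero, neg_zero] at h8
    refine tendsto_of_tendsto_of_tendsto_of_le_of_le h8 h9 ?_ ?_
    · intro t
      rw [hG]
      have : |t ^ n * Real.exp (-b * t ^ 2)| = |t| ^ n * Real.exp (-b * t ^ 2) := by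
        rw [_root_.abs_mul, _root_.abs_pow, _root_.abs_of_nonneg (Real.exp_pos _).le]
      have h11 := mul_le_mul_of_nonneg_left (neg_abs_le (t ^ n * Real.exp (-b * t ^ 2)))
        (by positivity : (0:ℝ) ≤ (v:ℝ) * C)
      rw [this] at h11
      refine le_trans (le_of_eq (by ring)) (le_trans h11 (le_of_eq (by ring)))
    · intro t
      rw [hG]
      have h10 : t ^ n * Real.exp (-b * t ^ 2) ≤ |t| ^ n * Real.exp (-b * t ^ 2) := by
        have := le_abs_self (t ^ n * Real.exp (-b * t ^ 2))
        rwa [_root_.abs_mul, _root_.abs_pow, _root_.abs_of_nonneg (Real.exp_pos _).le] at this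
      exact mul_le_mul_of_nonneg_left h10 (by positivity)
  have htop : Tendsto G atTop (nhds 0) := hKabs atTop tendsto_abs_atTop_atTop
  have hbot : Tendsto G atBot (nhds 0) := hKabs atBot tendsto_abs_atBot_atTop
  -- integrability of D
  have hDint : Integrable D volume := by
    have i1 : Integrable (fun x : ℝ => x ^ (n-1) * (C * Real.exp (-b * x ^ 2))) volume := by
      have := (hker (n-1)).const_mul C
      refine this.congr (Filter.Eventually.of_forall fun x => by ring)
    have i2 : Integrable (fun x : ℝ => x ^ (n+1) * (C * Real.exp (-b * x ^ 2))) volume := by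
      have := (hker (n+1)).const_mul C
      refine this.congr (Filter.Eventually.of_forall fun x => by ring)
    exact (i1.const_mul ((v:ℝ) * (n:ℝ))).sub i2
  -- FTC on both half lines
  have hIic : ∫ x in Set.Iic (0:ℝ), D x = G 0 - 0 :=
    integral_Iic_of_hasDerivAt_of_tendsto' (fun x _ => hderiv x) hDint.integrableOn hbot
  have hIoi : ∫ x in Set.Ioi (0:ℝ), D x = 0 - G 0 :=
    integral_Ioi_of_hasDerivAt_of_tendsto' (fun x _ => hderiv x) hDint.integrableOn htop
  have htot : ∫ x, D x = 0 := by
    rw [← intervalIntegral.integral_Iic_add_Ioi hDint.integrableOn hDint.integrableOn, hIic, hIoi]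
    ring
  -- unfold D and conclude
  have i1 : Integrable (fun x : ℝ => (v:ℝ) * (n:ℝ) * (x ^ (n-1) * (C * Real.exp (-b * x ^ 2)))) volume := by
    have := (hker (n-1)).const_mul ((v:ℝ) * (n:ℝ) * C)
    refine this.congr (Filter.Eventually.of_forall fun x => by ring)
  have i2 : Integrable (fun x : ℝ => x ^ (n+1) * (C * Real.exp (-b * x ^ 2))) volume := by
    have := (hker (n+1)).const_mul C
    refine this.congr (Filter.Eventually.of_forall fun x => by ring)
  rw [hD] at htot
  rw [integral_sub i1 i2, sub_eq_zero] at htot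
  -- transfer to gaussian integrals
  rw [integral_gauss hv, integral_gauss hv]
  have e1 : (fun x : ℝ => gaussianPDFReal 0 v x • x ^ (n+1)) =
      fun x : ℝ => x ^ (n+1) * (C * Real.exp (-b * x ^ 2)) := by
    funext x; rw [smul_eq_mul, pdf_eq hv]; ring
  have e2 : (fun x : ℝ => (v:ℝ) * (n:ℝ) * (gaussianPDFReal 0 v x • x ^ (n-1))) =
      fun x : ℝ => (v:ℝ) * (n:ℝ) * (x ^ (n-1) * (C * Real.exp (-b * x ^ 2))) := by
    funext x; rw [smul_eq_mul, pdf_eq hv]; ring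
  rw [e1, ← htot]
  rw [show ((v:ℝ) * (n:ℝ) * ∫ x, gaussianPDFReal 0 v x • x ^ (n-1)) =
      ∫ x, (v:ℝ) * (n:ℝ) * (gaussianPDFReal 0 v x • x ^ (n-1)) from (integral_const_mul _ _).symm]
  exact integral_congr_ae (Filter.Eventually.of_forall fun x => by
    simp only [smul_eq_mul, pdf_eq hv]; ring)

lemma integral_cpow_gauss_eq (hv : v ≠ 0) (p : ℕ) :
    ∫ t : ℝ, ((t:ℂ)) ^ p ∂(gaussianReal 0 v) =
      ((∫ t : ℝ, t ^ p ∂(gaussianReal 0 v) : ℝ) : ℂ) := by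
  rw [show (fun t : ℝ => ((t:ℂ))^p) = fun t : ℝ => ((t^p : ℝ) : ℂ) by
    funext t; push_cast; ring]
  exact integral_ofReal

/-- Stein's identity for polynomials of an affine function of a gaussian. -/
lemma stein (hv : v ≠ 0) (u w : ℂ) (k : ℕ) :
    ∫ t : ℝ, (t:ℂ) * (w + u * t) ^ k ∂(gaussianReal 0 v) =
      ((v:ℝ):ℂ) * k * u * ∫ t : ℝ, (w + u * t) ^ (k-1) ∂(gaussianReal 0 v) := by
  rcases k with _ | m
  · simp only [pow_zero, mul_one, Nat.cast_zero, mul_zero, zero_mul]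
    rw [show (fun t : ℝ => (t:ℂ)) = fun t : ℝ => ((t:ℂ))^1 by funext t; rw [pow_one]]
    rw [integral_cpow_gauss_eq hv 1]
    rw [show (1:ℕ) = 0 + 1 from rfl, mom_rec hv 0]
    simp
  · set γ := gaussianReal 0 v
    set V : ℂ := ((v:ℝ):ℂ) with hV
    have hint : ∀ (c : ℂ) (p : ℕ), Integrable (fun t : ℝ => c * ((t:ℂ))^p) γ :=
      fun c p => (integrable_cpow_gauss hv p).const_mul c
    have hL : (fun t : ℝ => (t:ℂ) * (w + u * t) ^ (m+1)) =
        fun t : ℝ => ∑ j ∈ Finset.range (m+2),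
          (w ^ j * u ^ (m+1-j) * (((m+1).choose j : ℕ) : ℂ)) * ((t:ℂ)) ^ (m+1-j+1) := by
      funext t
      rw [add_pow, Finset.mul_sum]
      refine Finset.sum_congr rfl fun j hj => ?_
      rw [mul_pow]
      ring
    have hR : (fun t : ℝ => ((w + u * t) : ℂ) ^ m) =
        fun t : ℝ => ∑ j ∈ Finset.range (m+1),
          (w ^ j * u ^ (m-j) * ((m.choose j : ℕ) : ℂ)) * ((t:ℂ)) ^ (m-j) := by
      funext t
      rw [add_pow]
      refine Finset.sum_congr rfl fun j hj => ?_
      rw [mul_pow]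
      ring
    have hLI : ∫ t : ℝ, (t:ℂ) * (w + u * t) ^ (m+1) ∂γ =
        ∑ j ∈ Finset.range (m+2), (w ^ j * u ^ (m+1-j) * (((m+1).choose j : ℕ) : ℂ)) *
          (V * ((m+1-j : ℕ) : ℂ) * ((∫ t : ℝ, t ^ (m+1-j-1) ∂γ : ℝ) : ℂ)) := by
      rw [hL, integral_finset_sum _ (fun j _ => hint _ _)]
      refine Finset.sum_congr rfl fun j hj => ?_
      rw [integral_const_mul, integral_cpow_gauss_eq hv]
      congr 1
      have hmom := congrArg (fun r : ℝ => (r : ℂ)) (mom_rec hv (m+1-j))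
      push_cast at hmom ⊢
      rw [hmom]
    have hRI : ∫ t : ℝ, ((w + u * t) : ℂ) ^ m ∂γ =
        ∑ j ∈ Finset.range (m+1), (w ^ j * u ^ (m-j) * ((m.choose j : ℕ) : ℂ)) *
          ((∫ t : ℝ, t ^ (m-j) ∂γ : ℝ) : ℂ) := by
      rw [hR, integral_finset_sum _ (fun j _ => hint _ _)]
      refine Finset.sum_congr rfl fun j hj => ?_
      rw [integral_const_mul, integral_cpow_gauss_eq hv]
    rw [Nat.add_sub_cancel, hLI, hRI, Finset.sum_range_succ]
    rw [Nat.sub_self]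
    simp only [Nat.cast_zero, mul_zero, zero_mul, add_zero]
    rw [Finset.mul_sum]
    refine Finset.sum_congr rfl fun j hj => ?_
    have hjm : j ≤ m := by
      simpa [Nat.lt_succ_iff] using hj
    have hj1 : m + 1 - j = (m - j) + 1 := by omega
    have hj2 : m + 1 - j - 1 = m - j := by omega
    rw [hj2, hj1]
    have hnat : (m+1).choose j * (m - j + 1) = (m+1) * m.choose j := by
      have h1 := Nat.choose_succ_right_eq (m+1) j
      have h2 := Nat.add_one_mul_choose_eq m j
      have h3 : m + 1 - j = m - j + 1 := by omega
      rw [h3] at h1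
      calc (m+1).choose j * (m - j + 1) = (m+1).choose (j+1) * (j+1) := h1.symm
        _ = (m+1) * m.choose j := h2.symm
    have hnatC : (((m+1).choose j : ℕ) : ℂ) * (((m - j) + 1 : ℕ) : ℂ) =
        (((m+1 : ℕ)) : ℂ) * ((m.choose j : ℕ) : ℂ) := by
      exact_mod_cast congrArg (fun r : ℕ => (r : ℂ)) hnat
    push_cast at hnatC ⊢
    linear_combination (w ^ j * u ^ (m-j) * u * V *
      ((∫ t : ℝ, t ^ (m-j) ∂γ : ℝ) : ℂ)) * hnatC

lemma integrable_one_add_abs_pow (hv : v ≠ 0) (n : ℕ) :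
    Integrable (fun x : ℝ => (1 + |x|) ^ n) (gaussianReal 0 v) := by
  have h : (fun x : ℝ => (1 + |x|) ^ n) = fun x : ℝ =>
      ∑ j ∈ Finset.range (n+1), |x| ^ j * ((1:ℝ) ^ (n-j) * (n.choose j : ℝ)) := by
    funext x
    rw [add_comm, add_pow]
    exact Finset.sum_congr rfl fun j hj => by ring
  rw [h]
  exact integrable_finset_sum _ fun j _ => (integrable_abs_pow_gauss hv j).mul_const _

/-- master integrability lemma on the product of two gaussians -/
lemma integrable_prod_bound (hv : v ≠ 0) {h : ℝ × ℝ → ℂ} (n : ℕ)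
    (hc : Continuous h)
    (hbd : ∀ p : ℝ × ℝ, ‖h p‖ ≤ ((1 + |p.1|) * (1 + |p.2|)) ^ n) :
    Integrable h ((gaussianReal 0 v).prod (gaussianReal 0 v)) := by
  refine Integrable.mono'
    ((integrable_one_add_abs_pow hv n).mul_prod (integrable_one_add_abs_pow hv n))
    hc.aestronglyMeasurable ?_
  filter_upwards with p
  rw [← mul_pow]
  exact hbd p

lemma norm_add_I_le (a b : ℝ) : ‖((a:ℂ) + Complex.I * b)‖ ≤ (1 + |a|) * (1 + |b|) := by
  refine (norm_add_le _ _).trans ?_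
  rw [norm_mul, Complex.norm_I, one_mul, Complex.norm_real, Complex.norm_real,
    Real.norm_eq_abs, Real.norm_eq_abs]
  nlinarith [abs_nonneg a, abs_nonneg b]

lemma integrable_pow_prod (hv : v ≠ 0) (k : ℕ) :
    Integrable (fun p : ℝ × ℝ => ((p.1:ℂ) + Complex.I * p.2) ^ k)
      ((gaussianReal 0 v).prod (gaussianReal 0 v)) := by
  refine integrable_prod_bound hv k ?_ ?_
  · exact ((Complex.continuous_ofReal.comp continuous_fst).add
      (continuous_const.mul (Complex.continuous_ofReal.comp continuous_snd))).pow k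
  · intro p
    rw [norm_pow]
    exact pow_le_pow_left₀ (norm_nonneg _) (norm_add_I_le p.1 p.2) k

lemma integrable_fst_pow_prod (hv : v ≠ 0) (k : ℕ) :
    Integrable (fun p : ℝ × ℝ => (p.1:ℂ) * ((p.1:ℂ) + Complex.I * p.2) ^ k)
      ((gaussianReal 0 v).prod (gaussianReal 0 v)) := by
  refine integrable_prod_bound hv (k+1) ?_ ?_
  · exact (Complex.continuous_ofReal.comp continuous_fst).mul
      (((Complex.continuous_ofReal.comp continuous_fst).add
        (continuous_const.mul (Complex.continuous_ofReal.comp continuous_snd))).pow k)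
  · intro p
    rw [norm_mul, norm_pow, pow_succ']
    have h1 : ‖((p.1:ℂ))‖ ≤ (1 + |p.1|) * (1 + |p.2|) := by
      rw [Complex.norm_real, Real.norm_eq_abs]
      nlinarith [abs_nonneg p.1, abs_nonneg p.2]
    have h2 : ‖((p.1:ℂ) + Complex.I * p.2)‖ ^ k ≤ ((1 + |p.1|) * (1 + |p.2|)) ^ k :=
      pow_le_pow_left₀ (norm_nonneg _) (norm_add_I_le p.1 p.2) k
    exact mul_le_mul h1 h2 (by positivity) (by positivity)

lemma integrable_snd_pow_prod (hv : v ≠ 0) (k : ℕ) :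
    Integrable (fun p : ℝ × ℝ => (p.2:ℂ) * ((p.1:ℂ) + Complex.I * p.2) ^ k)
      ((gaussianReal 0 v).prod (gaussianReal 0 v)) := by
  refine integrable_prod_bound hv (k+1) ?_ ?_
  · exact (Complex.continuous_ofReal.comp continuous_snd).mul
      (((Complex.continuous_ofReal.comp continuous_fst).add
        (continuous_const.mul (Complex.continuous_ofReal.comp continuous_snd))).pow k)
  · intro p
    rw [norm_mul, norm_pow, pow_succ']
    have h1 : ‖((p.2:ℂ))‖ ≤ (1 + |p.1|) * (1 + |p.2|) := by
      rw [Complex.norm_real, Real.norm_eq_abs]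
      nlinarith [abs_nonneg p.1, abs_nonneg p.2]
    have h2 : ‖((p.1:ℂ) + Complex.I * p.2)‖ ^ k ≤ ((1 + |p.1|) * (1 + |p.2|)) ^ k :=
      pow_le_pow_left₀ (norm_nonneg _) (norm_add_I_le p.1 p.2) k
    exact mul_le_mul h1 h2 (by positivity) (by positivity)

/-- Stein corollaries in the two coordinates -/
lemma steinA (hv : v ≠ 0) (c : ℂ) (k : ℕ) :
    ∫ t : ℝ, (t:ℂ) * ((t:ℂ) + c) ^ k ∂(gaussianReal 0 v) =
      ((v:ℝ):ℂ) * k * ∫ t : ℝ, ((t:ℂ) + c) ^ (k-1) ∂(gaussianReal 0 v) := by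
  have h1 : ∫ t : ℝ, (t:ℂ) * ((t:ℂ) + c) ^ k ∂(gaussianReal 0 v) =
      ∫ t : ℝ, (t:ℂ) * (c + 1 * t) ^ k ∂(gaussianReal 0 v) :=
    integral_congr_ae (Filter.Eventually.of_forall fun t => by ring_nf)
  have h2 : ∫ t : ℝ, ((t:ℂ) + c) ^ (k-1) ∂(gaussianReal 0 v) =
      ∫ t : ℝ, (c + 1 * t) ^ (k-1) ∂(gaussianReal 0 v) :=
    integral_congr_ae (Filter.Eventually.of_forall fun t => by ring_nf)
  rw [h1, h2, stein hv 1 c k]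
  ring

lemma steinB (hv : v ≠ 0) (c : ℂ) (k : ℕ) :
    ∫ t : ℝ, (t:ℂ) * (c + Complex.I * t) ^ k ∂(gaussianReal 0 v) =
      ((v:ℝ):ℂ) * k * Complex.I * ∫ t : ℝ, (c + Complex.I * t) ^ (k-1) ∂(gaussianReal 0 v) := by
  rw [stein hv Complex.I c k]

/-- the key vanishing of positive moments of the symmetric complex gaussian -/
lemma czero (hv : v ≠ 0) (k : ℕ) :
    ∫ p : ℝ × ℝ, ((p.1:ℂ) + Complex.I * p.2) ^ (k+1)
      ∂((gaussianReal 0 v).prod (gaussianReal 0 v)) = 0 := by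
  set γ := gaussianReal 0 v
  set π := γ.prod γ with hπ
  have hi1 := integrable_fst_pow_prod hv k
  have hi2 := integrable_snd_pow_prod hv k
  have hik := integrable_pow_prod hv (k-1)
  have hsplit : (fun p : ℝ × ℝ => ((p.1:ℂ) + Complex.I * p.2) ^ (k+1)) =
      fun p : ℝ × ℝ => (p.1:ℂ) * ((p.1:ℂ) + Complex.I * p.2) ^ k +
        Complex.I * ((p.2:ℂ) * ((p.1:ℂ) + Complex.I * p.2) ^ k) := by
    funext p
    rw [pow_succ]
    ring
  rw [hsplit, integral_add hi1 (hi2.const_mul Complex.I), integral_const_mul]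
  have hT1 : ∫ p : ℝ × ℝ, (p.1:ℂ) * ((p.1:ℂ) + Complex.I * p.2) ^ k ∂π =
      ((v:ℝ):ℂ) * k * ∫ p : ℝ × ℝ, ((p.1:ℂ) + Complex.I * p.2) ^ (k-1) ∂π := by
    rw [integral_prod_symm _ hi1, integral_prod_symm _ hik, ← integral_const_mul]
    refine integral_congr_ae (Filter.Eventually.of_forall fun b => ?_)
    dsimp only
    rw [steinA hv (Complex.I * b) k]
  have hT2 : ∫ p : ℝ × ℝ, (p.2:ℂ) * ((p.1:ℂ) + Complex.I * p.2) ^ k ∂π =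
      ((v:ℝ):ℂ) * k * Complex.I * ∫ p : ℝ × ℝ, ((p.1:ℂ) + Complex.I * p.2) ^ (k-1) ∂π := by
    rw [integral_prod _ hi2, integral_prod _ hik, ← integral_const_mul]
    refine integral_congr_ae (Filter.Eventually.of_forall fun a => ?_)
    dsimp only
    rw [steinB hv ((a:ℝ):ℂ) k]
  rw [hT1, hT2]
  have hI := Complex.I_mul_I
  linear_combination (((v:ℝ):ℂ) * k *
    ∫ p : ℝ × ℝ, ((p.1:ℂ) + Complex.I * p.2) ^ (k-1) ∂π) * hI

end

end PolyDebiasAux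

open PolyDebiasAux in
/-- If `ξ₁, ξ₂` are independent real Gaussian random variables with mean `0` and
variance `σ²`, then for any polynomial `f` with complex coefficients and any `x : ℝ`,
`E[f(x + ξ₁ + i ξ₂)] = f(x)`. -/
theorem polynomial_complex_debias
    {Ω : Type*} [MeasurableSpace Ω] (μ : Measure Ω) [IsProbabilityMeasure μ]
    (ξ₁ ξ₂ : Ω → ℝ) (σ2 : NNReal) (hσ2 : 0 < σ2)
    (hmeas₁ : Measurable ξ₁) (hmeas₂ : Measurable ξ₂)
    (hindep : IndepFun ξ₁ ξ₂ μ)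
    (hlaw₁ : Measure.map ξ₁ μ = gaussianReal 0 σ2)
    (hlaw₂ : Measure.map ξ₂ μ = gaussianReal 0 σ2)
    (f : Polynomial ℂ) (x : ℝ) :
    ∫ ω, f.eval ((x : ℂ) + (ξ₁ ω : ℂ) + Complex.I * (ξ₂ ω : ℂ)) ∂μ =
      f.eval (x : ℂ) := by
  have hv : σ2 ≠ 0 := hσ2.ne'
  set γ := gaussianReal 0 σ2 with hγ
  have hmap : Measure.map (fun ω => (ξ₁ ω, ξ₂ ω)) μ = γ.prod γ := by
    have h0 := (ProbabilityTheory.indepFun_iff_map_prod_eq_prod_map_map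
      hmeas₁.aemeasurable hmeas₂.aemeasurable).mp hindep
    rw [hlaw₁, hlaw₂] at h0
    exact h0
  set F : ℝ × ℝ → ℂ := fun p => f.eval ((x:ℂ) + p.1 + Complex.I * p.2) with hF
  have hFc : Continuous F := by
    refine f.continuous.comp ?_
    exact (continuous_const.add (Complex.continuous_ofReal.comp continuous_fst)).add
      (continuous_const.mul (Complex.continuous_ofReal.comp continuous_snd))
  have h1 : ∫ ω, f.eval ((x : ℂ) + (ξ₁ ω : ℂ) + Complex.I * (ξ₂ ω : ℂ)) ∂μ =
      ∫ p : ℝ × ℝ, F p ∂(γ.prod γ) := by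
    rw [← hmap, integral_map (hmeas₁.prodMk hmeas₂).aemeasurable
      hFc.aestronglyMeasurable]
  rw [h1]
  set g := f.comp (Polynomial.C ((x:ℝ):ℂ) + Polynomial.X) with hg
  have hFg : ∀ p : ℝ × ℝ, F p = ∑ j ∈ Finset.range (g.natDegree + 1),
      g.coeff j * ((p.1:ℂ) + Complex.I * p.2) ^ j := by
    intro p
    have h2 : F p = g.eval ((p.1:ℂ) + Complex.I * p.2) := by
      simp only [hF, hg, Polynomial.eval_comp, Polynomial.eval_add, Polynomial.eval_C,
        Polynomial.eval_X, add_assoc]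
    rw [h2, Polynomial.eval_eq_sum_range]
  calc ∫ p : ℝ × ℝ, F p ∂(γ.prod γ)
      = ∑ j ∈ Finset.range (g.natDegree + 1),
          g.coeff j * ∫ p : ℝ × ℝ, ((p.1:ℂ) + Complex.I * p.2) ^ j ∂(γ.prod γ) := by
        simp only [hFg]
        rw [integral_finset_sum _ (fun j _ => (integrable_pow_prod hv j).const_mul _)]
        exact Finset.sum_congr rfl fun j _ => integral_const_mul _ _
    _ = g.coeff 0 := by
        rw [Finset.sum_eq_single 0]
        · simp
        · intro j _ hj
          rcases j with _ | i
          · exact absurd rfl hj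
          · rw [czero hv i, mul_zero]
        · intro h
          exact absurd (Finset.mem_range.mpr (Nat.succ_pos _)) h
    _ = f.eval (x : ℂ) := by
        rw [Polynomial.coeff_zero_eq_eval_zero, hg, Polynomial.eval_comp]
        simp
end

section
/- Let ξ₁ and ξ₂ be independent standard normal random variables. Then for any entire function f : ℂ → ℂ whose Taylor series satisfies that expectation and summation can be exchanged (e.g. f of exponential type with summable moment bounds), E[f(x + ξ₁ + i·ξ₂)] = f(x) for every real x. -/
open MeasureTheory ProbabilityTheory Real Set

noncomputable def gaussMoment (n : ℕ) : ℝ := ∫ y, y ^ n ∂(gaussianReal 0 1)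

lemma gaussPDF_eq (y : ℝ) : gaussianPDFReal 0 1 y = (√(2 * π))⁻¹ * rexp (-(1/2) * y ^ 2) := by
  rw [gaussianPDFReal]
  norm_num
  left
  ring_nf

lemma gauss_eq_withDensity : gaussianReal 0 1
    = volume.withDensity (fun y => ((gaussianPDFReal 0 1 y).toNNReal : ENNReal)) := by
  rw [gaussianReal_of_var_ne_zero _ one_ne_zero]
  congr 1

lemma integral_gauss {E : Type*} [NormedAddCommGroup E] [NormedSpace ℝ E] (g : ℝ → E) :
    ∫ y, g y ∂(gaussianReal 0 1) = ∫ y, gaussianPDFReal 0 1 y • g y := by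
  rw [gauss_eq_withDensity,
    integral_withDensity_eq_integral_smul (measurable_gaussianPDFReal 0 1).real_toNNReal]
  congr 1
  ext y
  rw [NNReal.smul_def, Real.coe_toNNReal _ (gaussianPDFReal_nonneg _ _ _)]

lemma integrable_gauss_iff (g : ℝ → ℝ) :
    Integrable g (gaussianReal 0 1)
      ↔ Integrable (fun y => g y * gaussianPDFReal 0 1 y) volume := by
  rw [gauss_eq_withDensity, integrable_withDensity_iff
    ((measurable_gaussianPDFReal 0 1).real_toNNReal.coe_nnreal_ennreal)
    (Filter.Eventually.of_forall fun y => ENNReal.coe_lt_top)]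
  have h : ∀ y : ℝ, (((gaussianPDFReal 0 1 y).toNNReal : ENNReal)).toReal
      = gaussianPDFReal 0 1 y := fun y => by
    simp [Real.coe_toNNReal _ (gaussianPDFReal_nonneg _ _ _)]
  simp_rw [h]

lemma integrable_base (n : ℕ) :
    Integrable (fun y : ℝ => y ^ n * rexp (-(1/2) * y ^ 2)) volume := by
  have := integrable_rpow_mul_exp_neg_mul_sq (b := 1/2) (by norm_num) (s := (n : ℝ)) (by exact lt_of_lt_of_le (by norm_num) (Nat.cast_nonneg n))
  simpa [Real.rpow_natCast] using this

lemma gaussMoment_integrable (n : ℕ) :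
    Integrable (fun y : ℝ => y ^ n) (gaussianReal 0 1) := by
  rw [integrable_gauss_iff]
  have : (fun y : ℝ => y ^ n * gaussianPDFReal 0 1 y)
      = fun y => (√(2 * π))⁻¹ * (y ^ n * rexp (-(1/2) * y ^ 2)) := by
    funext y; rw [gaussPDF_eq]; ring
  rw [this]
  exact (integrable_base n).const_mul _

noncomputable def halfInt (m : ℕ) : ℝ := ∫ y in Ioi (0:ℝ), y ^ (2*m) * rexp (-(1/2) * y ^ 2)

lemma halfInt_eq (m : ℕ) : halfInt m
    = (1/2 : ℝ) ^ (-(2*(m:ℝ)+1)/2) * (1/2) * Gamma ((2*(m:ℝ)+1)/2) := by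
  have hq : (-1:ℝ) < 2*(m:ℝ) := by have := Nat.cast_nonneg (α := ℝ) m; linarith
  have h := integral_rpow_mul_exp_neg_mul_rpow (p := 2) (q := (2*m : ℝ)) (b := 1/2)
    (by norm_num) hq (by norm_num)
  rw [halfInt]
  rw [show ∫ y in Ioi (0:ℝ), y ^ (2*m) * rexp (-(1/2) * y ^ 2)
      = ∫ y in Ioi (0:ℝ), y ^ ((2*m : ℕ) : ℝ) * rexp (-(1/2) * y ^ ((2:ℕ):ℝ)) by
    simp_rw [Real.rpow_natCast]]
  push_cast at h ⊢
  rw [h]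

lemma halfInt_rec (m : ℕ) : halfInt (m + 1) = (2*(m:ℝ)+1) * halfInt m := by
  rw [halfInt_eq, halfInt_eq]
  have hne : (2*(m:ℝ)+1)/2 ≠ 0 := by positivity
  have hG : Gamma ((2*((m:ℝ)+1)+1)/2) = ((2*(m:ℝ)+1)/2) * Gamma ((2*(m:ℝ)+1)/2) := by
    rw [show (2*((m:ℝ)+1)+1)/2 = (2*(m:ℝ)+1)/2 + 1 by ring, Gamma_add_one hne]
  have hR : (1/2 : ℝ) ^ (-(2*((m:ℝ)+1)+1)/2) = 2 * (1/2:ℝ) ^ (-(2*(m:ℝ)+1)/2) := by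
    rw [show (-(2*((m:ℝ)+1)+1)/2 : ℝ) = -(2*(m:ℝ)+1)/2 + (-1) by ring,
      Real.rpow_add (by norm_num), Real.rpow_neg_one]
    ring
  push_cast
  rw [hG, hR]
  ring

lemma fullInt_eq (m : ℕ) :
    ∫ y : ℝ, y ^ (2*m) * rexp (-(1/2) * y ^ 2) = 2 * halfInt m := by
  have hbase : Integrable (fun y : ℝ => y ^ (2*m) * rexp (-(1/2) * y ^ 2)) volume := by
    have := integrable_rpow_mul_exp_neg_mul_sq (b := 1/2) (by norm_num) (s := ((2*m : ℕ) : ℝ))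
      (lt_of_lt_of_le (by norm_num) (Nat.cast_nonneg _))
    simp only [Real.rpow_natCast] at this
    simpa using this
  have hsplit := intervalIntegral.integral_Iic_add_Ioi (b := (0:ℝ)) (f := fun y : ℝ => y ^ (2*m) * rexp (-(1/2) * y ^ 2))
    hbase.integrableOn hbase.integrableOn
  have heven : ∫ y in Iic (0:ℝ), y ^ (2*m) * rexp (-(1/2) * y ^ 2) = halfInt m := by
    rw [halfInt, show Ioi (0:ℝ) = Ioi (-0 : ℝ) by norm_num, ← integral_comp_neg_Iic]
    congr 1
    funext y
    rw [Even.neg_pow (even_two_mul m), neg_sq]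
  rw [← hsplit, heven, halfInt]
  ring

lemma gauss_map_neg :
    (gaussianReal 0 1).map (fun y : ℝ => (-1) * y) = gaussianReal 0 1 := by
  have := gaussianReal_map_const_mul (μ := 0) (v := 1) (-1 : ℝ)
  simpa using this

lemma gaussMoment_pdf (n : ℕ) : gaussMoment n
    = (√(2 * π))⁻¹ * ∫ y : ℝ, y ^ n * rexp (-(1/2) * y ^ 2) := by
  rw [gaussMoment, integral_gauss, ← integral_const_mul]
  congr 1
  funext y
  rw [gaussPDF_eq, smul_eq_mul]
  ring

lemma gaussMoment_zero : gaussMoment 0 = 1 := by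
  simp [gaussMoment]

lemma gaussMoment_rec (m : ℕ) :
    gaussMoment (2 * (m + 1)) = (2*(m:ℝ)+1) * gaussMoment (2 * m) := by
  rw [gaussMoment_pdf, gaussMoment_pdf, fullInt_eq, fullInt_eq, halfInt_rec]
  ring

lemma gaussMoment_even (m : ℕ) :
    gaussMoment (2 * m) = (2 * m).factorial / (2 ^ m * m.factorial) := by
  induction m with
  | zero => simpa using gaussMoment_zero
  | succ m ih =>
      rw [gaussMoment_rec, ih]
      have h1 : (2 * (m + 1)).factorial
          = (2*m+2) * ((2*m+1) * (2*m).factorial) := by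
        rw [show 2 * (m+1) = (2*m+1) + 1 by ring, Nat.factorial_succ, Nat.factorial_succ]
      rw [h1]
      have h2 : (m + 1).factorial = (m+1) * m.factorial := Nat.factorial_succ m
      rw [h2]
      have hf : (0:ℝ) < m.factorial := by positivity
      have h2m : (0:ℝ) < 2 ^ m := by positivity
      push_cast
      field_simp
      ring

lemma gaussMoment_odd (n : ℕ) (hn : Odd n) : gaussMoment n = 0 := by
  have h1 : gaussMoment n = ∫ y, ((-1) * y) ^ n ∂(gaussianReal 0 1) := by
    rw [gaussMoment]
    conv_lhs => rw [← gauss_map_neg]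
    rw [integral_map (by fun_prop) (by fun_prop)]
  have h2 : ∫ y, ((-1:ℝ) * y) ^ n ∂(gaussianReal 0 1) = - gaussMoment n := by
    rw [gaussMoment]
    simp_rw [mul_pow, hn.neg_one_pow, neg_one_mul]
    exact integral_neg _
  rw [h2] at h1
  linarith

open Finset

lemma sum_even_reindex {A : Type*} [AddCommMonoid A] (m : ℕ) (f : ℕ → A)
    (hodd : ∀ l, ¬ Even l → f l = 0) :
    ∑ l ∈ range (2*m+1), f l = ∑ r ∈ range (m+1), f (2*r) := by
  rw [← Finset.sum_filter_add_sum_filter_not (range (2*m+1)) (fun l => Even l)]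
  have h2 : ∑ l ∈ (range (2*m+1)).filter (fun l => ¬ Even l), f l = 0 :=
    Finset.sum_eq_zero fun l hl => hodd l (Finset.mem_filter.mp hl).2
  have h1 : (range (2*m+1)).filter (fun l => Even l) = (range (m+1)).image (fun r => 2*r) := by
    ext l
    simp only [Finset.mem_filter, Finset.mem_range, Finset.mem_image, Nat.even_iff]
    constructor
    · rintro ⟨hl, he⟩; exact ⟨l/2, by omega, by omega⟩
    · rintro ⟨r, hr, rfl⟩; omega
  rw [h2, add_zero, h1, Finset.sum_image (fun a _ b _ h => by omega)]

lemma core_term (m r : ℕ) (hr : r ≤ m) :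
    ((2*m).choose (2*r) : ℂ) * ((2*r).factorial / (2^r * r.factorial) : ℝ)
      * ((2*(m-r)).factorial / (2^(m-r) * (m-r).factorial) : ℝ) * Complex.I ^ (2*(m-r))
    = (((2*m).factorial / (2^m * m.factorial) : ℝ) : ℂ) * ((-1)^(m-r) * (m.choose r)) := by
  obtain ⟨k, rfl⟩ := Nat.exists_eq_add_of_le hr
  rw [show r + k - r = k by omega]
  have hI : Complex.I ^ (2*k) = (-1 : ℂ)^k := by
    rw [pow_mul, Complex.I_sq]
  rw [hI]
  have hA : (((2*(r+k)).choose (2*r) : ℕ) : ℂ) * (2*r).factorial * (2*k).factorial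
      = (2*(r+k)).factorial := by
    have := Nat.choose_mul_factorial_mul_factorial (show 2*r ≤ 2*(r+k) by omega)
    rw [show 2*(r+k) - 2*r = 2*k by omega] at this
    exact_mod_cast congrArg (Nat.cast : ℕ → ℂ) this
  have hB : (((r+k).choose r : ℕ) : ℂ) * r.factorial * k.factorial = (r+k).factorial := by
    have := Nat.choose_mul_factorial_mul_factorial (show r ≤ r+k by omega)
    rw [show r + k - r = k by omega] at this
    exact_mod_cast congrArg (Nat.cast : ℕ → ℂ) this
  have d1 : ((2:ℂ)^r) ≠ 0 := pow_ne_zero _ two_ne_zero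
  have d2 : ((2:ℂ)^k) ≠ 0 := pow_ne_zero _ two_ne_zero
  have d3 : ((2:ℂ)^(r+k)) ≠ 0 := pow_ne_zero _ two_ne_zero
  have e1 : ((r.factorial : ℂ)) ≠ 0 := by exact_mod_cast Nat.factorial_ne_zero r
  have e2 : ((k.factorial : ℂ)) ≠ 0 := by exact_mod_cast Nat.factorial_ne_zero k
  have e3 : (((r+k).factorial : ℂ)) ≠ 0 := by exact_mod_cast Nat.factorial_ne_zero (r+k)
  push_cast
  field_simp
  linear_combination 2^(r+k) * ((r+k).factorial : ℂ) * hA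
    - 2^(r+k) * (((2*(r+k)).factorial : ℂ)) * hB

lemma alt_sum_zero (m : ℕ) (hm : m ≠ 0) :
    ∑ r ∈ range (m+1), (-1:ℂ)^(m-r) * (m.choose r) = 0 := by
  have h := add_pow (1:ℂ) (-1) m
  simp only [one_pow, one_mul, add_neg_cancel] at h
  rw [zero_pow hm] at h
  exact h.symm

lemma core_sum_zero (j : ℕ) (hj : j ≠ 0) :
    ∑ l ∈ range (j+1),
      ((j.choose l : ℕ) : ℂ) * (gaussMoment l : ℝ) * (gaussMoment (j-l) : ℝ)
        * Complex.I ^ (j-l) = 0 := by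
  rcases Nat.even_or_odd j with ⟨m, rfl⟩ | hodd
  · have hm : m ≠ 0 := by omega
    rw [show m + m = 2 * m by ring] at *
    rw [sum_even_reindex m _ (fun l hl => by
      rw [gaussMoment_odd l (Nat.not_even_iff_odd.mp hl)]
      simp)]
    have hterm : ∀ r ∈ range (m+1),
        (((2*m).choose (2*r) : ℕ) : ℂ) * (gaussMoment (2*r) : ℝ) * (gaussMoment (2*m-2*r) : ℝ)
          * Complex.I ^ (2*m-2*r)
        = ((((2*m).factorial / (2^m * m.factorial) : ℝ)) : ℂ)
            * ((-1)^(m-r) * (m.choose r)) := by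
      intro r hr
      have hrm : r ≤ m := by simpa [Nat.lt_succ_iff] using Finset.mem_range.mp hr
      rw [show 2*m - 2*r = 2*(m-r) by omega, gaussMoment_even, gaussMoment_even]
      exact core_term m r hrm
    rw [Finset.sum_congr rfl hterm, ← Finset.mul_sum, alt_sum_zero m hm, mul_zero]
  · apply Finset.sum_eq_zero
    intro l hl
    have hlj : l ≤ j := by simpa [Nat.lt_succ_iff] using Finset.mem_range.mp hl
    rcases Nat.even_or_odd l with he | ho
    · rw [gaussMoment_odd _ (Nat.Odd.sub_even hlj hodd he)]
      simp
    · rw [gaussMoment_odd _ ho]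
      simp

open MeasureTheory ProbabilityTheory Complex

/-- If `ξ₁, ξ₂` are independent standard normal random variables and `f : ℂ → ℂ` is an
entire function given by the everywhere-convergent power series `f z = ∑' n, a n * z ^ n`,
whose moment bounds `∑' n, ‖a n‖ * E[‖x + ξ₁ + i ξ₂‖ ^ n]` are summable (so that
expectation and summation can be exchanged), then `E[f(x + ξ₁ + i ξ₂)] = f(x)` for all
real `x`. -/
theorem analytic_complex_debias
    {Ω : Type*} [MeasurableSpace Ω] (μ : Measure Ω) [IsProbabilityMeasure μ]
    (ξ₁ ξ₂ : Ω → ℝ)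
    (hmeas₁ : Measurable ξ₁) (hmeas₂ : Measurable ξ₂)
    (hindep : IndepFun ξ₁ ξ₂ μ)
    (hlaw₁ : Measure.map ξ₁ μ = gaussianReal 0 1)
    (hlaw₂ : Measure.map ξ₂ μ = gaussianReal 0 1)
    (f : ℂ → ℂ) (a : ℕ → ℂ)
    (hf_entire : AnalyticOn ℂ f Set.univ)
    (hf_series : ∀ z : ℂ, f z = ∑' n : ℕ, a n * z ^ n)
    (x : ℝ)
    (hmoments : Summable fun n : ℕ =>
      ‖a n‖ * ∫ ω, ‖(x : ℂ) + (ξ₁ ω : ℂ) + Complex.I * (ξ₂ ω : ℂ)‖ ^ n ∂μ) :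
    ∫ ω, f ((x : ℂ) + (ξ₁ ω : ℂ) + Complex.I * (ξ₂ ω : ℂ)) ∂μ = f (x : ℂ) := by
  set Z : Ω → ℂ := fun ω => (x : ℂ) + (ξ₁ ω : ℂ) + Complex.I * (ξ₂ ω : ℂ) with hZ
  have hZmeas : Measurable Z := by fun_prop
  -- integrability of |ξ|^n
  have hAbs : ∀ (ξ : Ω → ℝ), Measurable ξ → Measure.map ξ μ = gaussianReal 0 1 →
      ∀ n : ℕ, Integrable (fun ω => |ξ ω| ^ n) μ := by
    intro ξ hm hlaw n
    have h1 : Integrable (fun y : ℝ => |y| ^ n) (gaussianReal 0 1) := by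
      have := (gaussMoment_integrable n).abs
      simpa [abs_pow] using this
    rw [← hlaw] at h1
    have := (integrable_map_measure ((measurable_id.abs.pow_const n).aestronglyMeasurable)
      hm.aemeasurable).mp h1
    simpa [Function.comp_def] using this
  -- norm bound
  have hZle : ∀ ω, ‖Z ω‖ ≤ |x| + |ξ₁ ω| + |ξ₂ ω| := fun ω => by
    calc ‖Z ω‖ ≤ ‖(x:ℂ) + (ξ₁ ω:ℂ)‖ + ‖Complex.I * (ξ₂ ω:ℂ)‖ := norm_add_le _ _
    _ ≤ (‖(x:ℂ)‖ + ‖(ξ₁ ω:ℂ)‖) + ‖Complex.I * (ξ₂ ω:ℂ)‖ := by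
        gcongr
        exact norm_add_le _ _
    _ = |x| + |ξ₁ ω| + |ξ₂ ω| := by
        simp [Complex.norm_real, norm_mul, Complex.norm_I, Real.norm_eq_abs]
  have tri : ∀ (a b c : ℝ), 0 ≤ a → 0 ≤ b → 0 ≤ c → ∀ n : ℕ,
      (a + b + c)^n ≤ 3^n * (a^n + b^n + c^n) := by
    intro a b c ha hb hc n
    have hmax : a + b + c ≤ 3 * max a (max b c) := by
      have h1 : a ≤ max a (max b c) := le_max_left _ _
      have h2 : b ≤ max a (max b c) := le_trans (le_max_left _ _) (le_max_right _ _)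
      have h3 : c ≤ max a (max b c) := le_trans (le_max_right _ _) (le_max_right _ _)
      linarith
    have pa := pow_nonneg ha n; have pb := pow_nonneg hb n; have pc := pow_nonneg hc n
    have hmn : (max a (max b c))^n ≤ a^n + b^n + c^n := by
      rcases max_choice a (max b c) with h | h
      · rw [h]; linarith
      · rw [h]; rcases max_choice b c with h' | h' <;> rw [h'] <;> linarith
    calc (a+b+c)^n ≤ (3 * max a (max b c))^n := by
          apply pow_le_pow_left₀ (by positivity) hmax
      _ = 3^n * (max a (max b c))^n := mul_pow 3 _ n
      _ ≤ 3^n * (a^n + b^n + c^n) :=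
          mul_le_mul_of_nonneg_left hmn (by positivity)
  have hGrow : ∀ n : ℕ, Integrable (fun ω => 3^n * (|x|^n + |ξ₁ ω|^n + |ξ₂ ω|^n)) μ := fun n =>
    (((integrable_const (|x|^n)).add (hAbs ξ₁ hmeas₁ hlaw₁ n)).add
      (hAbs ξ₂ hmeas₂ hlaw₂ n)).const_mul _
  have hnormZ : ∀ n : ℕ, Integrable (fun ω => ‖Z ω‖ ^ n) μ := by
    intro n
    refine (hGrow n).mono' ((hZmeas.norm.pow_const n).aestronglyMeasurable) ?_
    filter_upwards with ω
    have h0 : (0:ℝ) ≤ ‖Z ω‖ := norm_nonneg _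
    have h1 := tri |x| |ξ₁ ω| |ξ₂ ω| (abs_nonneg _) (abs_nonneg _) (abs_nonneg _) n
    have h2 : ‖Z ω‖^n ≤ (|x| + |ξ₁ ω| + |ξ₂ ω|)^n := pow_le_pow_left₀ h0 (hZle ω) n
    rw [Real.norm_eq_abs, _root_.abs_of_nonneg (pow_nonneg h0 n)]
    linarith
  have hZpow : ∀ n : ℕ, Integrable (fun ω => Z ω ^ n) μ := by
    intro n
    refine (hnormZ n).mono' ((hZmeas.pow_const n).aestronglyMeasurable) ?_
    filter_upwards with ω
    exact le_of_eq (norm_pow _ n)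
  -- moments transfer
  have hMom : ∀ (ξ : Ω → ℝ), Measurable ξ → Measure.map ξ μ = gaussianReal 0 1 →
      ∀ l : ℕ, ∫ ω, ξ ω ^ l ∂μ = gaussMoment l := by
    intro ξ hm hlaw l
    rw [gaussMoment, ← hlaw, integral_map hm.aemeasurable (by fun_prop)]
  have hprod : ∀ l m : ℕ, ∫ ω, (ξ₁ ω : ℂ)^l * (Complex.I * (ξ₂ ω : ℂ))^m ∂μ
      = ((gaussMoment l : ℝ) : ℂ) * ((gaussMoment m : ℝ) : ℂ) * Complex.I ^ m := by
    intro l m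
    have h1 : ∀ ω, (ξ₁ ω : ℂ)^l * (Complex.I * (ξ₂ ω : ℂ))^m
        = Complex.I ^ m * ((ξ₁ ω ^ l * ξ₂ ω ^ m : ℝ) : ℂ) := by
      intro ω; push_cast; ring
    simp_rw [h1]
    rw [integral_const_mul]
    rw [show ∫ ω, ((ξ₁ ω ^ l * ξ₂ ω ^ m : ℝ) : ℂ) ∂μ
        = ((∫ ω, ξ₁ ω ^ l * ξ₂ ω ^ m ∂μ : ℝ) : ℂ) from integral_ofReal]
    have h2 : ∫ ω, ξ₁ ω ^ l * ξ₂ ω ^ m ∂μ = (∫ ω, ξ₁ ω ^ l ∂μ) * ∫ ω, ξ₂ ω ^ m ∂μ := by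
      have := (hindep.comp (measurable_id.pow_const l) (measurable_id.pow_const m)).integral_mul_eq_mul_integral
        ((hmeas₁.pow_const l).aestronglyMeasurable) ((hmeas₂.pow_const m).aestronglyMeasurable)
      simpa [Function.comp_def, Pi.mul_apply] using this
    rw [h2, hMom ξ₁ hmeas₁ hlaw₁ l, hMom ξ₂ hmeas₂ hlaw₂ m]
    push_cast
    ring
  have hIntProd : ∀ l m : ℕ,
      Integrable (fun ω => (ξ₁ ω : ℂ)^l * (Complex.I * (ξ₂ ω : ℂ))^m) μ := by
    intro l m
    have hR : Integrable (fun ω => |ξ₁ ω|^l * |ξ₂ ω|^m) μ := by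
      have := (hindep.comp ((measurable_id.abs).pow_const l)
          ((measurable_id.abs).pow_const m)).integrable_mul
        (hAbs ξ₁ hmeas₁ hlaw₁ l) (hAbs ξ₂ hmeas₂ hlaw₂ m)
      exact this
    refine hR.mono' (((Complex.measurable_ofReal.comp hmeas₁).pow_const l).mul
      (((Complex.measurable_ofReal.comp hmeas₂).const_mul Complex.I).pow_const
        m)).aestronglyMeasurable ?_
    filter_upwards with ω
    refine le_of_eq ?_
    simp [Complex.norm_real, Complex.norm_I, Real.norm_eq_abs, _root_.abs_pow, norm_mul]
  have hzeta : ∀ j : ℕ, ∫ ω, ((ξ₁ ω : ℂ) + Complex.I * (ξ₂ ω : ℂ)) ^ j ∂μ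
      = ∑ l ∈ Finset.range (j+1), ((j.choose l : ℕ) : ℂ) * ((gaussMoment l : ℝ) : ℂ)
          * ((gaussMoment (j-l) : ℝ) : ℂ) * Complex.I ^ (j-l) := by
    intro j
    simp_rw [add_pow]
    rw [integral_finset_sum _ (fun l _ => ((hIntProd l (j-l)).mul_const _))]
    refine Finset.sum_congr rfl fun l _ => ?_
    rw [integral_mul_const, hprod l (j-l)]
    ring
  have hZeta_int : ∀ j : ℕ,
      Integrable (fun ω => ((ξ₁ ω : ℂ) + Complex.I * (ξ₂ ω : ℂ))^j) μ := by
    intro j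
    simp_rw [add_pow]
    exact integrable_finset_sum _ (fun l _ => (hIntProd l (j-l)).mul_const _)
  have hZn : ∀ n : ℕ, ∫ ω, Z ω ^ n ∂μ = (x:ℂ)^n := by
    intro n
    have hze : ∀ ω, Z ω = (x:ℂ) + ((ξ₁ ω:ℂ) + Complex.I * (ξ₂ ω : ℂ)) := fun ω => by
      rw [hZ]; ring
    have e1 : ∫ ω, Z ω ^ n ∂μ = ∫ ω, ∑ k ∈ Finset.range (n+1),
        (x:ℂ)^k * ((ξ₁ ω:ℂ) + Complex.I * (ξ₂ ω : ℂ))^(n-k) * ((n.choose k : ℕ) : ℂ) ∂μ :=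
      integral_congr_ae (Filter.Eventually.of_forall fun ω => by beta_reduce; rw [hze ω, add_pow])
    rw [e1, integral_finset_sum _ (fun k _ =>
      ((hZeta_int (n-k)).const_mul ((x:ℂ)^k)).mul_const _)]
    have hsummand : ∀ k ∈ Finset.range (n+1),
        ∫ ω, (x:ℂ)^k * ((ξ₁ ω:ℂ) + Complex.I * (ξ₂ ω : ℂ))^(n-k) * ((n.choose k : ℕ) : ℂ) ∂μ
        = (x:ℂ)^k * (∑ l ∈ Finset.range ((n-k)+1), (((n-k).choose l : ℕ) : ℂ)
            * ((gaussMoment l : ℝ) : ℂ) * ((gaussMoment ((n-k)-l) : ℝ) : ℂ)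
            * Complex.I ^ ((n-k)-l)) * ((n.choose k : ℕ) : ℂ) := by
      intro k _
      rw [integral_mul_const, integral_const_mul, hzeta]
    rw [Finset.sum_congr rfl hsummand]
    rw [Finset.sum_eq_single_of_mem n (Finset.self_mem_range_succ n)]
    · simp [gaussMoment_zero]
    · intro k hk hkn
      have hk' : k < n + 1 := Finset.mem_range.mp hk
      rw [core_sum_zero (n-k) (by omega), mul_zero, zero_mul]
  -- tsum exchange
  have hfz : ∀ ω, f (Z ω) = ∑' n, a n * Z ω ^ n := fun ω => hf_series (Z ω)
  have hlin : ∀ n : ℕ, ∫⁻ ω, ‖a n * Z ω ^ n‖₊ ∂μ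
      = ENNReal.ofReal (‖a n‖ * ∫ ω, ‖Z ω‖^n ∂μ) := by
    intro n
    have h1 : ∀ ω, (‖a n * Z ω ^ n‖₊ : ENNReal) = ENNReal.ofReal (‖a n‖ * ‖Z ω‖^n) := by
      intro ω
      rw [← enorm_eq_nnnorm, ← ofReal_norm, norm_mul, norm_pow]
    simp_rw [h1]
    rw [← ofReal_integral_eq_lintegral_ofReal ((hnormZ n).const_mul _)
      (Filter.Eventually.of_forall fun ω => by positivity), integral_const_mul]
  have hne : (∑' n : ℕ, ∫⁻ ω, ‖a n * Z ω ^ n‖₊ ∂μ) ≠ ⊤ := by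
    simp_rw [hlin]
    rw [← ENNReal.ofReal_tsum_of_nonneg
      (fun n => mul_nonneg (norm_nonneg _)
        (integral_nonneg (fun ω => pow_nonneg (norm_nonneg _) n))) hmoments]
    exact ENNReal.ofReal_ne_top
  calc ∫ ω, f (Z ω) ∂μ = ∫ ω, ∑' n, a n * Z ω ^ n ∂μ := by simp_rw [hfz]
    _ = ∑' n, ∫ ω, a n * Z ω ^ n ∂μ :=
        integral_tsum (fun n => ((hZmeas.pow_const n).const_mul (a n)).aestronglyMeasurable) hne
    _ = ∑' n, a n * (x:ℂ)^n := tsum_congr fun n => by rw [integral_const_mul, hZn n]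
    _ = f (x:ℂ) := (hf_series (x:ℂ)).symm
end

section
/- Let Ω and H be symmetric positive definite d×d real matrices with Ω − H positive definite, and let ξ ~ N(0, (2Ω)⁻¹) in ℝᵈ. Then for all real vectors x₁, x₂, E[exp{−(x₁ − x₂ − i ξ)ᵀ H (x₁ − x₂ − i ξ)}] = √(det Ω / det(Ω − H)) · exp{−(x₁ − x₂)ᵀ H_* (x₁ − x₂)}, where H_* = (H⁻¹ − Ω⁻¹)⁻¹. -/
open MeasureTheory Matrix Complex

section Aux

variable {n : Type*} [Fintype n] {R : Type*} [CommRing R]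

lemma mulVec_dot' (B : Matrix n n R) (u y : n → R) :
    (B *ᵥ u) ⬝ᵥ y = u ⬝ᵥ (Bᵀ *ᵥ y) := by
  rw [dotProduct_comm, dotProduct_mulVec, ← mulVec_transpose, dotProduct_comm]

lemma dot_symm' (M : Matrix n n R) (hM : Mᵀ = M) (v w : n → R) :
    v ⬝ᵥ M *ᵥ w = w ⬝ᵥ M *ᵥ v := by
  nth_rewrite 1 [← hM]
  rw [mulVec_transpose, dotProduct_comm, ← dotProduct_mulVec]

lemma conj_dot' (B M : Matrix n n R) (u v : n → R) :
    (B *ᵥ u) ⬝ᵥ M *ᵥ (B *ᵥ v) = u ⬝ᵥ ((Bᵀ * M * B) *ᵥ v) := by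
  rw [mulVec_mulVec, mulVec_dot', mulVec_mulVec, ← mul_assoc]

end Aux

section ChangeVar

lemma integral_comp_mulVec' {d : ℕ} (R : Matrix (Fin d) (Fin d) ℝ) (hR : R.det ≠ 0)
    (g : (Fin d → ℝ) → ℂ) (hg : Continuous g) :
    ∫ ξ, g ξ = ((|R.det| : ℝ) : ℂ) * ∫ u, g (R *ᵥ u) := by
  have hmeas : AEMeasurable (⇑(Matrix.toLin' R)) (volume : Measure (Fin d → ℝ)) :=
    ((Matrix.toLin' R).continuous_of_finiteDimensional).measurable.aemeasurable
  have h1 : ∫ u, g (R *ᵥ u) = ∫ ξ, g ξ ∂(Measure.map (⇑(Matrix.toLin' R)) volume) := by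
    rw [integral_map hmeas hg.aestronglyMeasurable]
    simp only [Matrix.toLin'_apply]
  rw [h1, Real.map_matrix_volume_pi_eq_smul_volume_pi hR, integral_smul_measure,
    ENNReal.toReal_ofReal (abs_nonneg _)]
  rw [Complex.real_smul, ← mul_assoc, ← Complex.ofReal_mul, abs_inv,
    mul_inv_cancel₀ (abs_ne_zero.2 hR), Complex.ofReal_one, one_mul]

end ChangeVar

/-- Closed-form complex Gaussian integral: if `Ω, H` are symmetric positive definite with
`Ω − H` positive definite, and `ξ ~ N(0, (2Ω)⁻¹)` (written via its density against
Lebesgue measure), then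
`E[exp{−(x₁−x₂−iξ)ᵀ H (x₁−x₂−iξ)}] = √(det Ω / det(Ω−H)) · exp{−(x₁−x₂)ᵀ H⋆ (x₁−x₂)}`
with `H⋆ = (H⁻¹ − Ω⁻¹)⁻¹`. -/
theorem complex_gaussian_kernel_integral
    (d : ℕ) (Om H : Matrix (Fin d) (Fin d) ℝ)
    (hOmSymm : Om.IsSymm) (hHSymm : H.IsSymm)
    (hOm : Om.PosDef) (hH : H.PosDef) (hOmH : (Om - H).PosDef)
    (x₁ x₂ : Fin d → ℝ) :
    (∫ ξ : Fin d → ℝ,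
      (Real.sqrt (((2 : ℝ) • Om).det / (2 * Real.pi) ^ d)
          * Real.exp (-(ξ ⬝ᵥ Om.mulVec ξ))) •
        Complex.exp (-((fun j => ((x₁ j - x₂ j : ℝ) : ℂ) - Complex.I * (ξ j : ℂ)) ⬝ᵥ
          (H.map (Complex.ofReal)).mulVec
            (fun j => ((x₁ j - x₂ j : ℝ) : ℂ) - Complex.I * (ξ j : ℂ)))))
    = (Real.sqrt (Om.det / (Om - H).det) : ℂ) *
      Complex.exp (-((((x₁ - x₂) ⬝ᵥ ((H⁻¹ - Om⁻¹)⁻¹).mulVec (x₁ - x₂) : ℝ)) : ℂ)) := by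
  classical
  set y : Fin d → ℝ := x₁ - x₂ with hy
  set A : Matrix (Fin d) (Fin d) ℝ := Om - H with hAdef
  have hHt : Hᵀ = H := hHSymm
  have hOt : Omᵀ = Om := hOmSymm
  have hAt : Aᵀ = A := by rw [hAdef, transpose_sub, hOt, hHt]
  have hAdet : (0:ℝ) < A.det := hOmH.det_pos
  have hOmdet : (0:ℝ) < Om.det := hOm.det_pos
  set S : Matrix (Fin d) (Fin d) ℝ := (open scoped MatrixOrder in CFC.sqrt A) with hSdef
  have hSS : S * S = A := open scoped MatrixOrder in CFC.sqrt_mul_sqrt_self A hOmH.posSemidef.nonneg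
  have hSt : Sᵀ = S := by open scoped MatrixOrder in simpa using ((by simpa using (CFC.sqrt_nonneg A).posSemidef.isHermitian : (CFC.sqrt A).IsSymm)).eq
  have hSdet2 : S.det * S.det = A.det := by rw [← Matrix.det_mul, hSS]
  have hSdetabs : |S.det| = Real.sqrt A.det := by
    rw [← hSdet2, ← sq, Real.sqrt_sq_eq_abs]
  have hSdet_ne : S.det ≠ 0 := by
    intro h; rw [h, mul_zero] at hSdet2; exact hAdet.ne' hSdet2.symm
  set R : Matrix (Fin d) (Fin d) ℝ := S⁻¹ with hRdef
  have hRt : Rᵀ = R := by rw [hRdef, Matrix.transpose_nonsing_inv, hSt]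
  have hSU : IsUnit S.det := isUnit_iff_ne_zero.2 hSdet_ne
  have hRS : R * S = 1 := Matrix.nonsing_inv_mul S hSU
  have hSR : S * R = 1 := Matrix.mul_nonsing_inv S hSU
  have hRAR : Rᵀ * A * R = 1 := by
    rw [hRt, ← hSS, show R * (S * S) * R = (R * S) * (S * R) by noncomm_ring, hRS, hSR, one_mul]
  have hRR : R * R = A⁻¹ := by rw [hRdef, ← Matrix.mul_inv_rev, hSS]
  have hRdet : |R.det| = (Real.sqrt A.det)⁻¹ := by
    rw [hRdef, Matrix.det_nonsing_inv, Ring.inverse_eq_inv', abs_inv, hSdetabs]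
  have hRdet_ne : R.det ≠ 0 := by
    intro h
    rw [h, abs_zero] at hRdet
    have : (0:ℝ) < (Real.sqrt A.det)⁻¹ := by positivity
    rw [← hRdet] at this
    exact lt_irrefl _ this
  set t : Fin d → ℝ := H *ᵥ y with htdef
  have hHU : IsUnit H.det := isUnit_iff_ne_zero.2 hH.det_pos.ne'
  have hOmU : IsUnit Om.det := isUnit_iff_ne_zero.2 hOmdet.ne'
  have hAU : IsUnit A.det := isUnit_iff_ne_zero.2 hAdet.ne'
  have hOmAH : Om = A + H := by rw [hAdef]; rw [sub_add_cancel]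
  have hX : Om * A⁻¹ * H = H + H * A⁻¹ * H := by
    calc Om * A⁻¹ * H = A * A⁻¹ * H + H * A⁻¹ * H := by rw [hOmAH]; noncomm_ring
    _ = H + H * A⁻¹ * H := by rw [Matrix.mul_nonsing_inv _ hAU, one_mul]
  have hX' : H * A⁻¹ * Om = H + H * A⁻¹ * H := by
    calc H * A⁻¹ * Om = H * (A⁻¹ * A) + H * A⁻¹ * H := by rw [hOmAH]; noncomm_ring
    _ = H + H * A⁻¹ * H := by rw [Matrix.nonsing_inv_mul _ hAU, mul_one]
  have hkey : (H⁻¹ - Om⁻¹) * (H + H * A⁻¹ * H) = 1 := by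
    have e1 : H⁻¹ * (H * A⁻¹ * Om) = A⁻¹ * Om := by
      calc H⁻¹ * (H * A⁻¹ * Om) = (H⁻¹ * H) * (A⁻¹ * Om) := by noncomm_ring
      _ = A⁻¹ * Om := by rw [Matrix.nonsing_inv_mul _ hHU, one_mul]
    have e2 : Om⁻¹ * (Om * A⁻¹ * H) = A⁻¹ * H := by
      calc Om⁻¹ * (Om * A⁻¹ * H) = (Om⁻¹ * Om) * (A⁻¹ * H) := by noncomm_ring
      _ = A⁻¹ * H := by rw [Matrix.nonsing_inv_mul _ hOmU, one_mul]
    calc (H⁻¹ - Om⁻¹) * (H + H * A⁻¹ * H)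
        = H⁻¹ * (H * A⁻¹ * Om) - Om⁻¹ * (Om * A⁻¹ * H) := by rw [hX', hX]; noncomm_ring
      _ = A⁻¹ * Om - A⁻¹ * H := by rw [e1, e2]
      _ = A⁻¹ * A := by rw [← mul_sub, ← hAdef]
      _ = 1 := Matrix.nonsing_inv_mul _ hAU
  have hHstar : (H⁻¹ - Om⁻¹)⁻¹ = H + H * A⁻¹ * H := Matrix.inv_eq_right_inv hkey
  have hexp : y ⬝ᵥ (H⁻¹ - Om⁻¹)⁻¹ *ᵥ y = y ⬝ᵥ H *ᵥ y + t ⬝ᵥ A⁻¹ *ᵥ t := by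
    rw [hHstar, add_mulVec, dotProduct_add]
    congr 1
    rw [htdef, ← mulVec_mulVec, ← mulVec_mulVec, dotProduct_mulVec, ← mulVec_transpose, hHt]
  -- constant identity
  have hc0sq : (0:ℝ) ≤ ((2 : ℝ) • Om).det / (2 * Real.pi) ^ d := by
    rw [Matrix.det_smul]
    have := Real.pi_pos
    have := hOmdet
    positivity
  set c₀ : ℝ := Real.sqrt (((2 : ℝ) • Om).det / (2 * Real.pi) ^ d) with hc₀
  have hconst : c₀ * |R.det| * (Real.sqrt Real.pi) ^ d = Real.sqrt (Om.det / A.det) := by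
    have hπ := Real.pi_pos
    have h1 : (0:ℝ) ≤ c₀ * |R.det| * (Real.sqrt Real.pi) ^ d := by positivity
    have h2 : (0:ℝ) ≤ Real.sqrt (Om.det / A.det) := Real.sqrt_nonneg _
    rw [← Real.sqrt_sq h1, ← Real.sqrt_sq h2]
    congr 1
    have eR : |R.det| ^ 2 = (A.det)⁻¹ := by
      rw [hRdet, ← Real.sqrt_inv, Real.sq_sqrt (by positivity)]
    have epi : ((Real.sqrt Real.pi) ^ d) ^ 2 = Real.pi ^ d := by
      rw [← pow_mul, mul_comm d 2, pow_mul, Real.sq_sqrt hπ.le]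
    have e2d : ((2 : ℝ) • Om).det = 2 ^ d * Om.det := by
      rw [Matrix.det_smul, Fintype.card_fin]
    rw [mul_pow, mul_pow, hc₀, Real.sq_sqrt hc0sq, eR, epi,
      Real.sq_sqrt (by positivity : (0:ℝ) ≤ Om.det / A.det), e2d, mul_pow]
    have hpid : Real.pi ^ d ≠ 0 := by positivity
    have h2d : (2:ℝ) ^ d ≠ 0 := by positivity
    field_simp
  -- complex side setup
  set Hc : Matrix (Fin d) (Fin d) ℂ := H.map Complex.ofReal with hHc
  have hHct : Hcᵀ = Hc := by rw [hHc, ← Matrix.transpose_map, hHt]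
  have hmv : ∀ w : Fin d → ℝ,
      Hc *ᵥ (fun j => ((w j : ℝ) : ℂ)) = fun j => (((H *ᵥ w) j : ℝ) : ℂ) := by
    intro w
    funext j
    exact (RingHom.map_mulVec Complex.ofRealHom H w j).symm
  have hdot : ∀ v w : Fin d → ℝ,
      (fun j => ((v j : ℝ) : ℂ)) ⬝ᵥ (fun j => ((w j : ℝ) : ℂ)) = ((v ⬝ᵥ w : ℝ) : ℂ) := by
    intro v w
    exact (RingHom.map_dotProduct Complex.ofRealHom v w).symm
  have hcast : ∀ v w : Fin d → ℝ,
      (fun j => ((v j : ℝ) : ℂ)) ⬝ᵥ Hc *ᵥ (fun j => ((w j : ℝ) : ℂ)) = ((v ⬝ᵥ H *ᵥ w : ℝ) : ℂ) := by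
    intro v w
    rw [hmv, hdot]
  set g : (Fin d → ℝ) → ℂ := fun ξ =>
    Complex.exp (((-(ξ ⬝ᵥ A *ᵥ ξ) : ℝ) : ℂ) + 2 * Complex.I * ((t ⬝ᵥ ξ : ℝ) : ℂ)) with hgdef
  have hty : ∀ ξ : Fin d → ℝ, y ⬝ᵥ H *ᵥ ξ = t ⬝ᵥ ξ := by
    intro ξ
    rw [htdef, mulVec_dot', hHt]
  have hAquad : ∀ ξ : Fin d → ℝ, ξ ⬝ᵥ A *ᵥ ξ = ξ ⬝ᵥ Om *ᵥ ξ - ξ ⬝ᵥ H *ᵥ ξ := by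
    intro ξ
    rw [hAdef, sub_mulVec, dotProduct_sub]
  have step1 : ∀ ξ : Fin d → ℝ,
      ((c₀ * Real.exp (-(ξ ⬝ᵥ Om *ᵥ ξ))) •
        Complex.exp (-((fun j => ((x₁ j - x₂ j : ℝ) : ℂ) - Complex.I * (ξ j : ℂ)) ⬝ᵥ
          Hc *ᵥ (fun j => ((x₁ j - x₂ j : ℝ) : ℂ) - Complex.I * (ξ j : ℂ)))))
      = ((c₀ : ℝ) : ℂ) * Complex.exp (-((y ⬝ᵥ H *ᵥ y : ℝ) : ℂ)) * g ξ := by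
    intro ξ
    have hw : (fun j => ((x₁ j - x₂ j : ℝ) : ℂ) - Complex.I * (ξ j : ℂ))
        = (fun j => ((y j : ℝ) : ℂ)) - Complex.I • (fun j => ((ξ j : ℝ) : ℂ)) := by
      funext j
      simp [hy]
    have hquad : ((fun j => ((y j : ℝ) : ℂ)) - Complex.I • (fun j => ((ξ j : ℝ) : ℂ))) ⬝ᵥ
          Hc *ᵥ ((fun j => ((y j : ℝ) : ℂ)) - Complex.I • (fun j => ((ξ j : ℝ) : ℂ)))
        = ((y ⬝ᵥ H *ᵥ y : ℝ) : ℂ) - 2 * Complex.I * ((t ⬝ᵥ ξ : ℝ) : ℂ)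
            + Complex.I ^ 2 * ((ξ ⬝ᵥ H *ᵥ ξ : ℝ) : ℂ) := by
      have hsym : (fun j => ((ξ j : ℝ) : ℂ)) ⬝ᵥ Hc *ᵥ (fun j => ((y j : ℝ) : ℂ))
          = (fun j => ((y j : ℝ) : ℂ)) ⬝ᵥ Hc *ᵥ (fun j => ((ξ j : ℝ) : ℂ)) := by
        nth_rewrite 1 [← hHct]
        rw [mulVec_transpose, dotProduct_comm, ← dotProduct_mulVec]
      simp only [sub_dotProduct, mulVec_sub, dotProduct_sub, mulVec_smul, dotProduct_smul,
        smul_dotProduct, smul_eq_mul, hsym]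
      simp only [hcast]
      rw [hty ξ]
      ring
    rw [hw, Complex.real_smul, Complex.ofReal_mul, Complex.ofReal_exp, hquad]
    simp only [hgdef]
    rw [mul_assoc, ← Complex.exp_add]
    conv_rhs => rw [mul_assoc, ← Complex.exp_add]
    congr 2
    rw [Complex.I_sq, hAquad ξ]
    push_cast
    ring
  have hqc : Continuous fun ξ : Fin d → ℝ => ξ ⬝ᵥ A *ᵥ ξ := by
    simp only [dotProduct, mulVec]
    exact continuous_finset_sum _ fun i _ => (continuous_apply i).mul
      (continuous_finset_sum _ fun j _ => (continuous_const.mul (continuous_apply j)))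
  have hlc : Continuous fun ξ : Fin d → ℝ => t ⬝ᵥ ξ := by
    simp only [dotProduct]
    exact continuous_finset_sum _ fun i _ => continuous_const.mul (continuous_apply i)
  have hg : Continuous g := by
    rw [hgdef]
    exact Complex.continuous_exp.comp ((Complex.continuous_ofReal.comp hqc.neg).add
      (continuous_const.mul (Complex.continuous_ofReal.comp hlc)))
  have hpihalf : ((Real.pi : ℝ) : ℂ) ^ ((1 : ℂ)/2) = ((Real.sqrt Real.pi : ℝ) : ℂ) := by
    rw [Real.sqrt_eq_rpow, Complex.ofReal_cpow Real.pi_pos.le]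
    norm_num
  have step4 : ∀ u : Fin d → ℝ, g (R *ᵥ u)
      = Complex.exp (-∑ i, (1 : ℂ) * ((u i : ℝ) : ℂ) ^ 2
          + ∑ i, (2 * Complex.I * (((R *ᵥ t) i : ℝ) : ℂ)) * ((u i : ℝ) : ℂ)) := by
    intro u
    rw [hgdef]
    have q1 : (R *ᵥ u) ⬝ᵥ A *ᵥ (R *ᵥ u) = u ⬝ᵥ u := by
      rw [conj_dot', hRAR, one_mulVec]
    have q2 : t ⬝ᵥ (R *ᵥ u) = (R *ᵥ t) ⬝ᵥ u := by
      rw [dotProduct_comm, mulVec_dot', hRt, dotProduct_comm]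
    simp only [q1, q2]
    congr 1
    have hu : u ⬝ᵥ u = ∑ i, (u i) ^ 2 := by
      simp [dotProduct, sq]
    have hs : (R *ᵥ t) ⬝ᵥ u = ∑ i, ((R *ᵥ t) i) * u i := rfl
    rw [hu, hs]
    push_cast
    rw [Finset.mul_sum]
    simp only [one_mul]
    congr 1
    exact Finset.sum_congr rfl fun i _ => by ring
  have hint : ∫ u : Fin d → ℝ, g (R *ᵥ u)
      = (((Real.sqrt Real.pi) ^ d : ℝ) : ℂ) * Complex.exp (-((t ⬝ᵥ A⁻¹ *ᵥ t : ℝ) : ℂ)) := by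
    simp only [step4]
    rw [GaussianFourier.integral_cexp_neg_sum_mul_add
      (b := fun _ : Fin d => (1 : ℂ)) (fun i => by norm_num)
      (fun i => 2 * Complex.I * (((R *ᵥ t) i : ℝ) : ℂ))]
    have e1 : ∀ i : Fin d, ((2 * Complex.I * (((R *ᵥ t) i : ℝ) : ℂ)) ^ 2 / (4 * 1))
        = -((((R *ᵥ t) i : ℝ) : ℂ)) ^ 2 := by
      intro i
      have : ((2 * Complex.I * (((R *ᵥ t) i : ℝ) : ℂ)) ^ 2 / (4 * 1))
          = Complex.I ^ 2 * ((((R *ᵥ t) i : ℝ) : ℂ)) ^ 2 := by ring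
      rw [this, Complex.I_sq]
      ring
    simp only [e1, div_one]
    rw [Finset.prod_mul_distrib, Finset.prod_const, ← Complex.exp_sum,
      Finset.card_univ, Fintype.card_fin, hpihalf]
    congr 1
    · push_cast
      ring
    · congr 1
      have hss : (R *ᵥ t) ⬝ᵥ (R *ᵥ t) = t ⬝ᵥ A⁻¹ *ᵥ t := by
        rw [mulVec_dot', hRt, mulVec_mulVec, hRR]
      rw [← hss]
      have : (R *ᵥ t) ⬝ᵥ (R *ᵥ t) = ∑ i, ((R *ᵥ t) i) * ((R *ᵥ t) i) := rfl
      rw [this]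
      push_cast
      rw [← Finset.sum_neg_distrib]
      exact Finset.sum_congr rfl fun i _ => by ring
  -- put everything together
  simp only [step1]
  rw [MeasureTheory.integral_const_mul, integral_comp_mulVec' R hRdet_ne g hg, hint, hexp,
    ← hconst]
  push_cast
  rw [neg_add, Complex.exp_add]
  ring
end

section
/- Let A, Â be bounded self-adjoint operators on a real Hilbert space H with A positive semi-definite and ‖Â − A‖ ≤ ε for some 0 ≤ ε < λ, let ζ, ζ̂ ∈ H with ‖ζ̂ − ζ‖ ≤ ε₁, and let s̄ minimize ⟨s,(A+λI)s⟩ + ⟨ζ,s⟩ while ŝ minimizes ⟨s,(Â+λI)s⟩ + ⟨ζ̂,s⟩. Then (λ − ε)·‖ŝ − s̄‖ ≤ ε₁ + 2ε‖s̄‖, and hence ‖ŝ − s̄‖ ≤ (ε₁ + 2ε‖s̄‖)/(λ − ε). -/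
open RealInnerProductSpace

/-- Perturbation bound for regularized quadratic minimizers: let `A, Â` be bounded
self-adjoint operators on a real Hilbert space with `A ⪰ 0` and `‖Â − A‖ ≤ ε < λ`,
let `‖ζ̂ − ζ‖ ≤ ε₁`, and let `s̄, ŝ` satisfy the first-order optimality conditions
`2(A + λI)s̄ + ζ = 0` and `2(Â + λI)ŝ + ζ̂ = 0` of the respective regularized
quadratic objectives.  Then `(λ − ε)‖ŝ − s̄‖ ≤ ε₁ + 2ε‖s̄‖`, and hence
`‖ŝ − s̄‖ ≤ (ε₁ + 2ε‖s̄‖)/(λ − ε)`. -/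
theorem perturbed_quadratic_minimizer_bound
    {H : Type*} [NormedAddCommGroup H] [InnerProductSpace ℝ H] [CompleteSpace H]
    (A Ahat : H →L[ℝ] H) (hA_sa : IsSelfAdjoint A) (hAhat_sa : IsSelfAdjoint Ahat)
    (hA_psd : ∀ s : H, 0 ≤ ⟪s, A s⟫)
    (lam ε ε₁ : ℝ) (hε : 0 ≤ ε) (heps_lt : ε < lam) (hε₁ : 0 ≤ ε₁)
    (hAop : ‖Ahat - A‖ ≤ ε)
    (ζ ζhat : H) (hζ : ‖ζhat - ζ‖ ≤ ε₁)
    (sbar shat : H)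
    (hsbar : (2 : ℝ) • (A sbar + lam • sbar) + ζ = 0)
    (hshat : (2 : ℝ) • (Ahat shat + lam • shat) + ζhat = 0) :
    (lam - ε) * ‖shat - sbar‖ ≤ ε₁ + 2 * ε * ‖sbar‖ ∧
    ‖shat - sbar‖ ≤ (ε₁ + 2 * ε * ‖sbar‖) / (lam - ε) := by
  set d := shat - sbar with hd
  have hkey : (2 : ℝ) • Ahat d + (2 * lam) • d + (2 : ℝ) • ((Ahat - A) sbar)
      + (ζhat - ζ) = 0 := by
    have h := congrArg₂ (· - ·) hshat hsbar
    simp only [sub_zero] at h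
    have hAd : Ahat d = Ahat shat - Ahat sbar := by simp [hd, map_sub]
    have hAA : (Ahat - A) sbar = Ahat sbar - A sbar := by simp
    rw [hAd, hAA, hd]
    rw [← h]
    module
  have hip := congrArg (fun x => ⟪d, x⟫) hkey
  simp only [inner_add_right, inner_smul_right, inner_zero_right,
    real_inner_self_eq_norm_sq] at hip
  -- hip : 2*⟪d, Ahat d⟫ + 2*lam*‖d‖^2 + 2*⟪d,(Ahat-A)sbar⟫ + ⟪d, ζhat-ζ⟫ = 0
  have hbound1 : |⟪d, (Ahat - A) d⟫| ≤ ε * ‖d‖ ^ 2 := by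
    calc |⟪d, (Ahat - A) d⟫| ≤ ‖d‖ * ‖(Ahat - A) d‖ := abs_real_inner_le_norm _ _
      _ ≤ ‖d‖ * (ε * ‖d‖) := by
          gcongr
          exact le_trans ((Ahat - A).le_opNorm d) (by gcongr)
      _ = ε * ‖d‖ ^ 2 := by ring
  have hAhat_d : -(ε * ‖d‖ ^ 2) ≤ ⟪d, Ahat d⟫ := by
    have : ⟪d, Ahat d⟫ = ⟪d, A d⟫ + ⟪d, (Ahat - A) d⟫ := by
      rw [← inner_add_right]; congr 1; simp
    rw [this]
    have := hA_psd d
    nlinarith [neg_abs_le ⟪d, (Ahat - A) d⟫]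
  have hbound2 : |⟪d, (Ahat - A) sbar⟫| ≤ ε * ‖sbar‖ * ‖d‖ := by
    calc |⟪d, (Ahat - A) sbar⟫| ≤ ‖d‖ * ‖(Ahat - A) sbar‖ := abs_real_inner_le_norm _ _
      _ ≤ ‖d‖ * (ε * ‖sbar‖) := by
          gcongr
          exact le_trans ((Ahat - A).le_opNorm sbar) (by gcongr)
      _ = ε * ‖sbar‖ * ‖d‖ := by ring
  have hbound3 : |⟪d, ζhat - ζ⟫| ≤ ε₁ * ‖d‖ := by
    calc |⟪d, ζhat - ζ⟫| ≤ ‖d‖ * ‖ζhat - ζ‖ := abs_real_inner_le_norm _ _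
      _ ≤ ‖d‖ * ε₁ := by gcongr
      _ = ε₁ * ‖d‖ := by ring
  have hmain : (lam - ε) * ‖d‖ ^ 2 ≤ (ε₁ + 2 * ε * ‖sbar‖) * ‖d‖ := by
    nlinarith [neg_abs_le ⟪d, (Ahat - A) sbar⟫, neg_abs_le ⟪d, ζhat - ζ⟫,
      sq_nonneg ‖d‖, norm_nonneg d]
  have hfirst : (lam - ε) * ‖d‖ ≤ ε₁ + 2 * ε * ‖sbar‖ := by
    rcases eq_or_lt_of_le (norm_nonneg d) with h0 | h0
    · rw [← h0]
      nlinarith [norm_nonneg sbar]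
    · have := (mul_le_mul_iff_of_pos_right h0).mp (by nlinarith : ((lam - ε) * ‖d‖) * ‖d‖ ≤ (ε₁ + 2 * ε * ‖sbar‖) * ‖d‖)
      exact this
  refine ⟨hfirst, ?_⟩
  rw [le_div_iff₀ (by linarith : (0:ℝ) < lam - ε), mul_comm]
  linarith [hfirst]
end
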